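/- Let 𝒜 be a pre-2-filtered 2-category and F a pseudofunctor from 𝒜 to Cat. Given premorphisms ξ₁, ξ₂, ξ₃ : (A, x) → (B, y) with codomains C₁, C₂, C₃ and homotopies (w₁, w₂, α, β) : ξ₁ ⇒ ξ₂ with vertex C and (w₂′, w₃, α′, β′) : ξ₂ ⇒ ξ₃ with vertex C′, there exist 1-cells h : C ⟶ H, h′ : C′ ⟶ H and an invertible 2-cell γ : w₂ ≫ h ⟹ w₂′ ≫ h′ such that (w₁ ≫ h, w₃ ≫ h′, α′ ∘_γ α, β′ ∘_γ β) is a homotopy ξ₁ ⇒ ξ₃, where α′ ∘_γ α denotes the vertical composite (α ▷ h) ≫ (v₂ ◁ γ) ≫ (α′ ▷ h′) : v₁ ≫ (w₁ ≫ h) ⟹ v₃ ≫ (w₃ ≫ h′) and similarly for β′ ∘_γ β. In particular, equivalence of premorphisms is transitive. -/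

import Mathlib

open CategoryTheory Bicategory CategoryTheory.Limits

universe w₂ v₂ u₂ w v u p p' t s t' s' t₁ s₁ t₂ s₂

namespace DubucStreet

variable {𝒜 : Type u} [Bicategory.{w, v} 𝒜]

/-- The LL equation for a pair of 2-cells `(α, β)` relative to `(γ₁, γ₂)`. -/
def LLeq {E A B C₁ C₂ C : 𝒜} (f : E ⟶ A) (g : E ⟶ B)
    {u₁ : A ⟶ C₁} {v₁ : B ⟶ C₁} {u₂ : A ⟶ C₂} {v₂ : B ⟶ C₂}
    (γ₁ : f ≫ u₁ ⟶ g ≫ v₁) (γ₂ : f ≫ u₂ ⟶ g ≫ v₂)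
    (w₁ : C₁ ⟶ C) (w₂ : C₂ ⟶ C)
    (α : v₁ ≫ w₁ ⟶ v₂ ≫ w₂) (β : u₁ ≫ w₁ ⟶ u₂ ≫ w₂) : Prop :=
  (α_ f u₁ w₁).inv ≫ (γ₁ ▷ w₁) ≫ (α_ g v₁ w₁).hom ≫ (g ◁ α) =
    (f ◁ β) ≫ (α_ f u₂ w₂).inv ≫ (γ₂ ▷ w₂) ≫ (α_ g v₂ w₂).hom

/-- Axiom F1 : every cospan of 1-cells can be completed to a square with an
invertible 2-cell. -/
def AxiomF1 (𝒜 : Type u) [Bicategory.{w, v} 𝒜] : Prop :=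
  ∀ {E A B : 𝒜} (f : E ⟶ A) (g : E ⟶ B),
    ∃ (C : 𝒜) (u : A ⟶ C) (v : B ⟶ C), Nonempty (f ≫ u ≅ g ≫ v)

/-- Axiom F2 : any two 2-cells as below can be equalized by a pair of invertible
2-cells satisfying the LL equation. -/
def AxiomF2 (𝒜 : Type u) [Bicategory.{w, v} 𝒜] : Prop :=
  ∀ {E A B C₁ C₂ : 𝒜} {f : E ⟶ A} {g : E ⟶ B}
    {u₁ : A ⟶ C₁} {v₁ : B ⟶ C₁} {u₂ : A ⟶ C₂} {v₂ : B ⟶ C₂}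
    (γ₁ : f ≫ u₁ ⟶ g ≫ v₁) (γ₂ : f ≫ u₂ ⟶ g ≫ v₂),
    ∃ (C : 𝒜) (w₁ : C₁ ⟶ C) (w₂ : C₂ ⟶ C)
      (α : v₁ ≫ w₁ ≅ v₂ ≫ w₂) (β : u₁ ≫ w₁ ≅ u₂ ≫ w₂),
      LLeq f g γ₁ γ₂ w₁ w₂ α.hom β.hom

/-- A premorphism `(A, x) → (B, y)` : a cospan `u : A ⟶ C`, `v : B ⟶ C` together with a
morphism `ξ : F(u)(x) ⟶ F(v)(y)` in `F(C)`. -/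
structure Premor (F : Pseudofunctor 𝒜 Cat.{v₂, u₂}) (A B : 𝒜) (x : F.obj A) (y : F.obj B) where
  cod : 𝒜
  u : A ⟶ cod
  v : B ⟶ cod
  ξ : (F.map u).toFunctor.obj x ⟶ (F.map v).toFunctor.obj y

/-- The LL equation for homotopy data `(w₁, w₂, α, β)` between two premorphisms :
`F(w₁)(ξ₁) ≫ F(α)_y = F(β)_x ≫ F(w₂)(ξ₂)`, all identifications being made via the
compositor isomorphisms of `F`. -/
def HomotopyLL (F : Pseudofunctor 𝒜 Cat.{v₂, u₂}) {A B : 𝒜} {x : F.obj A} {y : F.obj B}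
    (p q : Premor F A B x y) {V : 𝒜} (w₁ : p.cod ⟶ V) (w₂ : q.cod ⟶ V)
    (α : p.v ≫ w₁ ⟶ q.v ≫ w₂) (β : p.u ≫ w₁ ⟶ q.u ≫ w₂) : Prop :=
  (F.map w₁).toFunctor.map p.ξ ≫ (F.mapComp p.v w₁).inv.toNatTrans.app y ≫ (F.map₂ α).toNatTrans.app y ≫
      (F.mapComp q.v w₂).hom.toNatTrans.app y =
    (F.mapComp p.u w₁).inv.toNatTrans.app x ≫ (F.map₂ β).toNatTrans.app x ≫ (F.mapComp q.u w₂).hom.toNatTrans.app x ≫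
      (F.map w₂).toFunctor.map q.ξ

/-- A homotopy `(w₁, w₂, α, β)` between two premorphisms. -/
structure Homotopy (F : Pseudofunctor 𝒜 Cat.{v₂, u₂}) {A B : 𝒜} {x : F.obj A} {y : F.obj B}
    (p q : Premor F A B x y) where
  vertex : 𝒜
  w₁ : p.cod ⟶ vertex
  w₂ : q.cod ⟶ vertex
  α : p.v ≫ w₁ ≅ q.v ≫ w₂
  β : p.u ≫ w₁ ≅ q.u ≫ w₂
  ll : HomotopyLL F p q w₁ w₂ α.hom β.hom

/-- Two premorphisms are equivalent when there is a homotopy from one to the other. -/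
def PreEquiv (F : Pseudofunctor 𝒜 Cat.{v₂, u₂}) {A B : 𝒜} {x : F.obj A} {y : F.obj B}
    (p q : Premor F A B x y) : Prop :=
  Nonempty (Homotopy F p q)

/-- `α' ∘_γ α` : the LL-composition of the 2-cells `α` and `α'` over `γ`. -/
def compOver {X C₁ C₂ C₃ V V' H : 𝒜} {v₁ : X ⟶ C₁} {v₂ : X ⟶ C₂} {v₃ : X ⟶ C₃}
    {w₁ : C₁ ⟶ V} {w₂ : C₂ ⟶ V} {w₂' : C₂ ⟶ V'} {w₃ : C₃ ⟶ V'}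
    (α : v₁ ≫ w₁ ⟶ v₂ ≫ w₂) (α' : v₂ ≫ w₂' ⟶ v₃ ≫ w₃)
    {h : V ⟶ H} {h' : V' ⟶ H} (γ : w₂ ≫ h ⟶ w₂' ≫ h') :
    v₁ ≫ (w₁ ≫ h) ⟶ v₃ ≫ (w₃ ≫ h') :=
  (α_ v₁ w₁ h).inv ≫ (α ▷ h) ≫ (α_ v₂ w₂ h).hom ≫ (v₂ ◁ γ) ≫
    (α_ v₂ w₂' h').inv ≫ (α' ▷ h') ≫ (α_ v₃ w₃ h').hom


lemma map₂_assoc_inv (F : Pseudofunctor 𝒜 Cat.{v₂, u₂}) {a b c d : 𝒜}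
    (f : a ⟶ b) (g : b ⟶ c) (k : c ⟶ d) :
    F.map₂ (α_ f g k).inv = (F.mapComp f (g ≫ k)).hom ≫ F.map f ◁ (F.mapComp g k).hom ≫
      (α_ (F.map f) (F.map g) (F.map k)).inv ≫ (F.mapComp f g).inv ▷ F.map k ≫
      (F.mapComp (f ≫ g) k).inv := by
  have h0 : F.map₂ (α_ f g k).inv = inv (F.map₂ (α_ f g k).hom) := by
    rw [← F.map₂_inv]; simp
  rw [h0]
  apply IsIso.inv_eq_of_hom_inv_id
  rw [F.map₂_associator]
  simp

lemma expand (F : Pseudofunctor 𝒜 Cat.{v₂, u₂})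
    {X C₁ C₂ C₃ V V' H : 𝒜} {v₁ : X ⟶ C₁} {v₂ : X ⟶ C₂} {v₃ : X ⟶ C₃}
    {w₁ : C₁ ⟶ V} {w₂ : C₂ ⟶ V} {w₂' : C₂ ⟶ V'} {w₃ : C₃ ⟶ V'}
    (α : v₁ ≫ w₁ ⟶ v₂ ≫ w₂) (α' : v₂ ≫ w₂' ⟶ v₃ ≫ w₃)
    {h : V ⟶ H} {h' : V' ⟶ H} (γ : w₂ ≫ h ⟶ w₂' ≫ h') (z : F.obj X) :
    (F.mapComp v₁ (w₁ ≫ h)).inv.toNatTrans.app z ≫ (F.map₂ (compOver α α' γ)).toNatTrans.app z ≫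
      (F.mapComp v₃ (w₃ ≫ h')).hom.toNatTrans.app z =
    (F.mapComp w₁ h).hom.toNatTrans.app ((F.map v₁).toFunctor.obj z) ≫
    (F.map h).toFunctor.map ((F.mapComp v₁ w₁).inv.toNatTrans.app z ≫ (F.map₂ α).toNatTrans.app z ≫
      (F.mapComp v₂ w₂).hom.toNatTrans.app z) ≫
    (F.mapComp w₂ h).inv.toNatTrans.app ((F.map v₂).toFunctor.obj z) ≫ (F.map₂ γ).toNatTrans.app ((F.map v₂).toFunctor.obj z) ≫
    (F.mapComp w₂' h').hom.toNatTrans.app ((F.map v₂).toFunctor.obj z) ≫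
    (F.map h').toFunctor.map ((F.mapComp v₂ w₂').inv.toNatTrans.app z ≫ (F.map₂ α').toNatTrans.app z ≫
      (F.mapComp v₃ w₃).hom.toNatTrans.app z) ≫
    (F.mapComp w₃ h').inv.toNatTrans.app ((F.map v₃).toFunctor.obj z) := by
  simp [compOver, map₂_assoc_inv, Cat.associator_hom_app, Cat.associator_inv_app,
    Cat.whiskerLeft_app, Cat.whiskerRight_app]

lemma mapComp_hom_app_nat (F : Pseudofunctor 𝒜 Cat.{v₂, u₂}) {a b c : 𝒜}
    (f : a ⟶ b) (g : b ⟶ c) {z z' : F.obj a} (t : z ⟶ z') :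
    (F.map (f ≫ g)).toFunctor.map t ≫ (F.mapComp f g).hom.toNatTrans.app z' =
      (F.mapComp f g).hom.toNatTrans.app z ≫ (F.map g).toFunctor.map ((F.map f).toFunctor.map t) :=
  (F.mapComp f g).hom.toNatTrans.naturality t

lemma mapComp_inv_app_nat (F : Pseudofunctor 𝒜 Cat.{v₂, u₂}) {a b c : 𝒜}
    (f : a ⟶ b) (g : b ⟶ c) {z z' : F.obj a} (t : z ⟶ z') :
    (F.map g).toFunctor.map ((F.map f).toFunctor.map t) ≫ (F.mapComp f g).inv.toNatTrans.app z' =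
      (F.mapComp f g).inv.toNatTrans.app z ≫ (F.map (f ≫ g)).toFunctor.map t :=
  (F.mapComp f g).inv.toNatTrans.naturality t

lemma compOver_ll (F : Pseudofunctor 𝒜 Cat.{v₂, u₂}) {A B : 𝒜} {x : F.obj A} {y : F.obj B}
    {p₁ p₂ p₃ : Premor F A B x y}
    {V : 𝒜} {w₁ : p₁.cod ⟶ V} {w₂ : p₂.cod ⟶ V}
    {α : p₁.v ≫ w₁ ⟶ p₂.v ≫ w₂} {β : p₁.u ≫ w₁ ⟶ p₂.u ≫ w₂}
    (hll : HomotopyLL F p₁ p₂ w₁ w₂ α β)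
    {V' : 𝒜} {w₂' : p₂.cod ⟶ V'} {w₃ : p₃.cod ⟶ V'}
    {α' : p₂.v ≫ w₂' ⟶ p₃.v ≫ w₃} {β' : p₂.u ≫ w₂' ⟶ p₃.u ≫ w₃}
    (hll' : HomotopyLL F p₂ p₃ w₂' w₃ α' β')
    {H : 𝒜} (h : V ⟶ H) (h' : V' ⟶ H) (γ : w₂ ≫ h ⟶ w₂' ≫ h') :
    HomotopyLL F p₁ p₃ (w₁ ≫ h) (w₃ ≫ h') (compOver α α' γ) (compOver β β' γ) := by
  unfold HomotopyLL at *
  rw [expand, reassoc_of% (expand F β β' γ x)]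
  have hh := congrArg (fun t => (F.map h).toFunctor.map t) hll
  have hh' := congrArg (fun t => (F.map h').toFunctor.map t) hll'
  simp only [Functor.map_comp] at hh hh'
  simp only [Functor.map_comp, Category.assoc]
  rw [reassoc_of% mapComp_hom_app_nat F w₁ h p₁.ξ, reassoc_of% hh,
    reassoc_of% mapComp_inv_app_nat F w₂ h p₂.ξ,
    reassoc_of% (F.map₂ γ).toNatTrans.naturality p₂.ξ,
    reassoc_of% mapComp_hom_app_nat F w₂' h' p₂.ξ,
    reassoc_of% hh',
    mapComp_inv_app_nat F w₃ h' p₃.ξ]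

instance compOver_isIso {X C₁ C₂ C₃ V V' H : 𝒜} {v₁ : X ⟶ C₁} {v₂ : X ⟶ C₂} {v₃ : X ⟶ C₃}
    {w₁ : C₁ ⟶ V} {w₂ : C₂ ⟶ V} {w₂' : C₂ ⟶ V'} {w₃ : C₃ ⟶ V'}
    (α : v₁ ≫ w₁ ⟶ v₂ ≫ w₂) (α' : v₂ ≫ w₂' ⟶ v₃ ≫ w₃)
    {h : V ⟶ H} {h' : V' ⟶ H} (γ : w₂ ≫ h ⟶ w₂' ≫ h')
    [IsIso α] [IsIso α'] [IsIso γ] : IsIso (compOver α α' γ) := by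
  unfold compOver; infer_instance

/-- Vertical composition of homotopies : given homotopies `(w₁, w₂, α, β) : ξ₁ ⇒ ξ₂`
and `(w₂', w₃, α', β') : ξ₂ ⇒ ξ₃`, there are 1-cells `h`, `h'` and an invertible
2-cell `γ : w₂ ≫ h ≅ w₂' ≫ h'` such that
`(w₁ ≫ h, w₃ ≫ h', α' ∘_γ α, β' ∘_γ β)` is a homotopy `ξ₁ ⇒ ξ₃`.
In particular, equivalence of premorphisms is transitive. -/
theorem vertical_composition_of_homotopies [Bicategory.Strict 𝒜]
    (h1 : AxiomF1 𝒜) (h2 : AxiomF2 𝒜)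
    (F : Pseudofunctor 𝒜 Cat.{v₂, u₂}) {A B : 𝒜} {x : F.obj A} {y : F.obj B}
    (p₁ p₂ p₃ : Premor F A B x y)
    {V : 𝒜} (w₁ : p₁.cod ⟶ V) (w₂ : p₂.cod ⟶ V)
    (α : p₁.v ≫ w₁ ≅ p₂.v ≫ w₂) (β : p₁.u ≫ w₁ ≅ p₂.u ≫ w₂)
    (hll : HomotopyLL F p₁ p₂ w₁ w₂ α.hom β.hom)
    {V' : 𝒜} (w₂' : p₂.cod ⟶ V') (w₃ : p₃.cod ⟶ V')
    (α' : p₂.v ≫ w₂' ≅ p₃.v ≫ w₃) (β' : p₂.u ≫ w₂' ≅ p₃.u ≫ w₃)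
    (hll' : HomotopyLL F p₂ p₃ w₂' w₃ α'.hom β'.hom) :
    (∃ (H : 𝒜) (h : V ⟶ H) (h' : V' ⟶ H) (γ : w₂ ≫ h ≅ w₂' ≫ h'),
      HomotopyLL F p₁ p₃ (w₁ ≫ h) (w₃ ≫ h')
        (compOver α.hom α'.hom γ.hom) (compOver β.hom β'.hom γ.hom)) ∧
    (∀ q₁ q₂ q₃ : Premor F A B x y,
      PreEquiv F q₁ q₂ → PreEquiv F q₂ q₃ → PreEquiv F q₁ q₃) := by
  constructor
  · obtain ⟨H, h, h', ⟨γ⟩⟩ := h1 w₂ w₂'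
    exact ⟨H, h, h', γ, compOver_ll F hll hll' h h' γ.hom⟩
  · rintro q₁ q₂ q₃ ⟨t⟩ ⟨t'⟩
    obtain ⟨H, h, h', ⟨γ⟩⟩ := h1 t.w₂ t'.w₁
    exact ⟨⟨H, t.w₁ ≫ h, t'.w₂ ≫ h',
      asIso (compOver t.α.hom t'.α.hom γ.hom),
      asIso (compOver t.β.hom t'.β.hom γ.hom),
      compOver_ll F t.ll t'.ll h h' γ.hom⟩⟩

end DubucStreet
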